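/- (Hommel inequality) If all K hypotheses are null, then for arbitrarily dependent p-variables, P(S_K(P) ≤ α) ≤ ℓ_K·α for all α ∈ [0,1], where S_K(p) = min_k (K/k)·p_(k) and ℓ_K = Σ_{k=1}^K 1/k. -/

import Mathlib

open MeasureTheory ProbabilityTheory Finset
open scoped ENNReal Classical

noncomputable section

/-- The `i`-th smallest value (0-indexed) among `p 0, …, p (K-1)`. -/
def sortAsc {K : ℕ} (p : Fin K → ℝ) : Fin K → ℝ := p ∘ Tuple.sort p

/-- The `i`-th largest value (0-indexed) among `e 0, …, e (K-1)`. -/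
def sortDesc {K : ℕ} (e : Fin K → ℝ) : Fin K → ℝ := e ∘ Tuple.sort (fun j => -e j)

/-- `k* = max {k : K p_(k) / k ≤ α}` (with `max ∅ = 0`), the BH rejection count. -/
def bhCount (K : ℕ) (α : ℝ) (p : Fin K → ℝ) : ℕ :=
  (univ.filter (fun i : Fin K => (K : ℝ) * sortAsc p i / (i.1 + 1) ≤ α)).sup
    (fun i => i.1 + 1)

/-- The BH procedure rejects the hypotheses carrying the `k*` smallest p-values. -/
def bhRejects (K : ℕ) (α : ℝ) (p : Fin K → ℝ) : Finset (Fin K) :=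
  univ.filter (fun k => ∃ i : Fin K, i.1 + 1 ≤ bhCount K α p ∧ p k ≤ sortAsc p i)

/-- `k* = max {k : k e_[k] / K ≥ 1/α}`, the e-BH rejection count. -/
def ebhCount (K : ℕ) (α : ℝ) (e : Fin K → ℝ) : ℕ :=
  (univ.filter (fun i : Fin K => 1 / α ≤ (i.1 + 1) * sortDesc e i / K)).sup
    (fun i => i.1 + 1)

/-- The e-BH procedure rejects the hypotheses carrying the `k*` largest e-values. -/
def ebhRejects (K : ℕ) (α : ℝ) (e : Fin K → ℝ) : Finset (Fin K) :=
  univ.filter (fun k => ∃ i : Fin K, i.1 + 1 ≤ ebhCount K α e ∧ sortDesc e i ≤ e k)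

/-- Simes function `S_K(p) = min_k (K/k) p_(k)`. -/
def simes (K : ℕ) (p : Fin K → ℝ) : ℝ := ⨅ i : Fin K, (K : ℝ) / (i.1 + 1) * sortAsc p i

/-- Harmonic number `ℓ_K = ∑_{k=1}^K 1/k`. -/
def harm (K : ℕ) : ℝ := ∑ k ∈ Finset.Icc 1 K, (1 : ℝ) / k

/-- An increasing (upper) subset of `ℝ^K`. -/
def IncreasingSet {K : ℕ} (A : Set (Fin K → ℝ)) : Prop := ∀ x ∈ A, ∀ y, x ≤ y → y ∈ A

/-- Positive regression dependence on the subset `N` of nulls. -/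
def PRDS {Ω : Type*} [MeasurableSpace Ω] (μ : Measure Ω) {K : ℕ}
    (P : Fin K → Ω → ℝ) (N : Finset (Fin K)) : Prop :=
  ∀ k ∈ N, ∀ A : Set (Fin K → ℝ), MeasurableSet A → IncreasingSet A →
    Monotone (fun x : ℝ => μ[|{ω | P k ω ≤ x}] {ω | (fun j => P j ω) ∈ A})

/-- False discovery proportion of a rejection set `D` w.r.t. the null set `N`. -/
def fdp {K : ℕ} (D N : Finset (Fin K)) : ℝ := ((D ∩ N).card : ℝ) / (max D.card 1 : ℕ)

end

private lemma tele_sum (m : ℕ) (hm : 0 < m) : ∀ K, m ≤ K →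
    (1:ℝ)/K + ∑ k ∈ Finset.Ico m K, (1:ℝ)/((k:ℝ)*((k:ℝ)+1)) = 1/m := by
  intro K hK
  induction K, hK using Nat.le_induction with
  | base => simp
  | succ K hmK ih =>
    rw [Finset.sum_Ico_succ_top hmK]
    have hK0 : (0:ℝ) < K := by
      have : 0 < K := lt_of_lt_of_le hm hmK
      exact_mod_cast this
    have hkey : (1:ℝ)/((K:ℝ)+1) + 1/((K:ℝ)*((K:ℝ)+1)) = 1/K := by
      field_simp
    push_cast
    linarith [ih]

private lemma harm_eq (K : ℕ) (hK : 1 ≤ K) :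
    (1:ℝ) + ∑ k ∈ Finset.Ico 1 K, (1:ℝ)/((k:ℝ)+1) = harm K := by
  induction K, hK using Nat.le_induction with
  | base => simp [harm]
  | succ K hK ih =>
    rw [Finset.sum_Ico_succ_top hK, harm, Finset.sum_Icc_succ_top (by omega : 1 ≤ K+1)]
    rw [harm] at ih
    push_cast
    push_cast at ih
    linarith

private lemma hommel_arith (K : ℕ) (hK : 0 < K) (α : ℝ) :
    (1/(K:ℝ))*((K:ℝ)*α/K) + ∑ k ∈ Finset.Ico 1 K, (1/((k:ℝ)*((k:ℝ)+1)))*((k:ℝ)*α/K)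
      = harm K * α / K := by
  have hK0 : (K:ℝ) ≠ 0 := Nat.cast_ne_zero.mpr hK.ne'
  have h1 : ∀ k ∈ Finset.Ico 1 K, (1/((k:ℝ)*((k:ℝ)+1)))*((k:ℝ)*α/K)
      = (α/K) * ((1:ℝ)/((k:ℝ)+1)) := by
    intro k hk
    have hk0 : (k:ℝ) ≠ 0 := Nat.cast_ne_zero.mpr (by
      have := (Finset.mem_Ico.mp hk).1; omega)
    have hk1 : (k:ℝ)+1 ≠ 0 := by positivity
    field_simp
  rw [Finset.sum_congr rfl h1, ← Finset.mul_sum]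
  have hfirst : (1/(K:ℝ))*((K:ℝ)*α/K) = (α/K) * 1 := by field_simp
  rw [hfirst, ← mul_add, harm_eq K hK]
  ring

private lemma count_le_sortAsc {K : ℕ} (p : Fin K → ℝ) (i : Fin K) :
    i.1 + 1 ≤ (Finset.univ.filter (fun j => p j ≤ sortAsc p i)).card := by
  have hsub : (Finset.Iic i).image (Tuple.sort p)
      ⊆ Finset.univ.filter (fun j => p j ≤ sortAsc p i) := by
    intro j hj
    simp only [Finset.mem_image, Finset.mem_Iic] at hj
    obtain ⟨a, ha, rfl⟩ := hj
    simp only [Finset.mem_filter, Finset.mem_univ, true_and]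
    exact Tuple.monotone_sort p ha
  calc i.1 + 1 = (Finset.Iic i).card := (Fin.card_Iic i).symm
    _ = ((Finset.Iic i).image (Tuple.sort p)).card :=
        (Finset.card_image_of_injective _ (Equiv.injective _)).symm
    _ ≤ _ := Finset.card_le_card hsub


/-- **Hommel's inequality.** If all `K` hypotheses are null, then for arbitrarily
dependent p-variables, `P(S_K(P) ≤ α) ≤ ℓ_K α` for all `α ∈ [0,1]`. -/
theorem hommel_inequality
    {Ω : Type*} [MeasurableSpace Ω] (μ : Measure Ω) [IsProbabilityMeasure μ]
    {K : ℕ} (hK : 0 < K)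
    (P : Fin K → Ω → ℝ) (hP : ∀ k, Measurable (P k))
    (h_pvar : ∀ k, ∀ x ∈ Set.Ioo (0 : ℝ) 1, μ {ω | P k ω ≤ x} ≤ ENNReal.ofReal x) :
    ∀ α ∈ Set.Icc (0 : ℝ) 1,
      μ {ω | simes K (fun j => P j ω) ≤ α} ≤ ENNReal.ofReal (harm K * α) := by
  intro α hα
  obtain ⟨hα0, hα1⟩ := hα
  have hKR : (0:ℝ) < K := by exact_mod_cast hK
  -- p-variables put zero mass at (-∞, 0]
  have hzero : ∀ i : Fin K, μ {ω | P i ω ≤ 0} = 0 := by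
    intro i
    refine le_antisymm ?_ zero_le
    refine ENNReal.le_of_forall_pos_le_add fun ε hε _ => ?_
    rw [zero_add]
    set x : ℝ := min (ε:ℝ) 1 / 2 with hxdef
    have hε' : (0:ℝ) < ε := hε
    have hx0 : 0 < x := by
      have : (0:ℝ) < min (ε:ℝ) 1 := lt_min hε' one_pos
      positivity
    have hx1 : x < 1 := by
      have : min (ε:ℝ) 1 ≤ 1 := min_le_right _ _
      rw [hxdef]; linarith
    calc μ {ω | P i ω ≤ 0} ≤ μ {ω | P i ω ≤ x} :=
          measure_mono (fun ω h => le_trans h hx0.le)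
      _ ≤ ENNReal.ofReal x := h_pvar i x ⟨hx0, hx1⟩
      _ ≤ (ε : ℝ≥0∞) := by
          rw [← ENNReal.ofReal_coe_nnreal]
          refine ENNReal.ofReal_le_ofReal ?_
          have : min (ε:ℝ) 1 ≤ (ε:ℝ) := min_le_left _ _
          rw [hxdef]; linarith
  -- key CDF bound
  have key : ∀ (i : Fin K) (k : ℕ), k ≤ K →
      μ {ω | P i ω ≤ (k:ℝ)*α/K} ≤ ENNReal.ofReal ((k:ℝ)*α/K) := by
    intro i k hk
    set x : ℝ := (k:ℝ)*α/K with hxdef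
    have hx0 : 0 ≤ x := by positivity
    have hx1 : x ≤ 1 := by
      rw [hxdef, div_le_one hKR]
      calc (k:ℝ)*α ≤ (K:ℝ)*1 := by
            apply mul_le_mul (by exact_mod_cast hk) hα1 hα0 hKR.le
        _ = K := mul_one _
    rcases eq_or_lt_of_le hx0 with h0 | h0
    · have hx : x = 0 := h0.symm
      rw [hx]
      simpa [hx] using (hzero i).le
    rcases eq_or_lt_of_le hx1 with h1 | h1
    · rw [h1, ENNReal.ofReal_one]
      exact prob_le_one
    · exact h_pvar i x ⟨h0, h1⟩
  classical
  set B : ℕ → Fin K → Set Ω := fun k i => {ω | P i ω ≤ (k:ℝ)*α/K} with hB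
  have hBmeas : ∀ k i, MeasurableSet (B k i) :=
    fun k i => measurableSet_le (hP i) measurable_const
  set F : Ω → ℝ≥0∞ := fun ω => ∑ i : Fin K,
      (ENNReal.ofReal (1/(K:ℝ)) * (B K i).indicator 1 ω
        + ∑ k ∈ Finset.Ico 1 K,
            ENNReal.ofReal (1/((k:ℝ)*((k:ℝ)+1))) * (B k i).indicator 1 ω) with hF
  -- pointwise claim
  have claim1 : ∀ ω, simes K (fun j => P j ω) ≤ α → (1:ℝ≥0∞) ≤ F ω := by
    intro ω hω
    set p : Fin K → ℝ := fun j => P j ω with hp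
    haveI : Nonempty (Fin K) := Fin.pos_iff_nonempty.mp hK
    obtain ⟨i₀, hi₀⟩ := Finite.exists_min (fun i : Fin K => (K:ℝ)/(i.1+1) * sortAsc p i)
    have hmin : (K:ℝ)/(i₀.1+1) * sortAsc p i₀ ≤ α := le_trans (le_ciInf hi₀) hω
    set m : ℕ := i₀.1 + 1 with hm
    have hm0 : 0 < m := Nat.succ_pos _
    have hmK : m ≤ K := i₀.2
    have hmR : (0:ℝ) < m := by exact_mod_cast hm0
    have hsort : sortAsc p i₀ ≤ (m:ℝ)*α/K := by
      rw [le_div_iff₀ hKR]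
      have hmcast : ((i₀.1:ℝ)+1) = (m:ℝ) := by push_cast [hm]; ring
      rw [div_mul_eq_mul_div, div_le_iff₀ (by rw [hmcast]; exact hmR)] at hmin
      rw [hmcast] at hmin
      linarith
    set T := Finset.univ.filter (fun j => p j ≤ sortAsc p i₀) with hT
    have hcard : m ≤ T.card := count_le_sortAsc p i₀
    have hmem : ∀ i ∈ T, ∀ k, m ≤ k → ω ∈ B k i := by
      intro i hi k hk1
      simp only [hB, Set.mem_setOf_eq]
      have hpi : p i ≤ (m:ℝ)*α/K :=
        le_trans (by simpa [hT] using (Finset.mem_filter.mp hi).2) hsort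
      refine le_trans hpi ?_
      have hk' : (m:ℝ) ≤ (k:ℝ) := by exact_mod_cast hk1
      gcongr
    have hinner : ∀ i ∈ T, ENNReal.ofReal ((1:ℝ)/m) ≤
        ENNReal.ofReal (1/(K:ℝ)) * (B K i).indicator 1 ω
          + ∑ k ∈ Finset.Ico 1 K,
              ENNReal.ofReal (1/((k:ℝ)*((k:ℝ)+1))) * (B k i).indicator 1 ω := by
      intro i hi
      have h1 : (B K i).indicator (1 : Ω → ℝ≥0∞) ω = 1 :=
        Set.indicator_of_mem (hmem i hi K hmK) 1
      have h2 : ∀ k ∈ Finset.Ico m K,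
          ENNReal.ofReal (1/((k:ℝ)*((k:ℝ)+1))) * (B k i).indicator 1 ω
            = ENNReal.ofReal (1/((k:ℝ)*((k:ℝ)+1))) := by
        intro k hk
        rw [Finset.mem_Ico] at hk
        rw [Set.indicator_of_mem (hmem i hi k hk.1), Pi.one_apply, mul_one]
      calc ENNReal.ofReal ((1:ℝ)/m)
          = ENNReal.ofReal ((1:ℝ)/K + ∑ k ∈ Finset.Ico m K, (1:ℝ)/((k:ℝ)*((k:ℝ)+1))) := by
            rw [tele_sum m hm0 K hmK]
        _ = ENNReal.ofReal ((1:ℝ)/K)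
            + ENNReal.ofReal (∑ k ∈ Finset.Ico m K, (1:ℝ)/((k:ℝ)*((k:ℝ)+1))) :=
            ENNReal.ofReal_add (by positivity) (by positivity)
        _ = ENNReal.ofReal ((1:ℝ)/K)
            + ∑ k ∈ Finset.Ico m K, ENNReal.ofReal ((1:ℝ)/((k:ℝ)*((k:ℝ)+1))) := by
            rw [ENNReal.ofReal_sum_of_nonneg (fun k _ => by positivity)]
        _ ≤ _ := by
            refine add_le_add (by rw [h1, mul_one]) ?_
            calc ∑ k ∈ Finset.Ico m K, ENNReal.ofReal ((1:ℝ)/((k:ℝ)*((k:ℝ)+1)))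
                = ∑ k ∈ Finset.Ico m K,
                    ENNReal.ofReal (1/((k:ℝ)*((k:ℝ)+1))) * (B k i).indicator 1 ω :=
                  Finset.sum_congr rfl (fun k hk => (h2 k hk).symm)
              _ ≤ _ := Finset.sum_le_sum_of_subset
                  (Finset.Ico_subset_Ico hm0 le_rfl)
    calc (1:ℝ≥0∞) = ENNReal.ofReal ((m:ℝ) * ((1:ℝ)/m)) := by
          rw [mul_one_div, div_self hmR.ne', ENNReal.ofReal_one]
      _ = (m : ℝ≥0∞) * ENNReal.ofReal ((1:ℝ)/m) := by
          rw [ENNReal.ofReal_mul (by positivity), ENNReal.ofReal_natCast]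
      _ ≤ (T.card : ℝ≥0∞) * ENNReal.ofReal ((1:ℝ)/m) :=
          mul_le_mul_left (by exact_mod_cast hcard) _
      _ = ∑ _i ∈ T, ENNReal.ofReal ((1:ℝ)/m) := by
          rw [Finset.sum_const, nsmul_eq_mul]
      _ ≤ ∑ i ∈ T,
            (ENNReal.ofReal (1/(K:ℝ)) * (B K i).indicator 1 ω
              + ∑ k ∈ Finset.Ico 1 K,
                  ENNReal.ofReal (1/((k:ℝ)*((k:ℝ)+1))) * (B k i).indicator 1 ω) :=
          Finset.sum_le_sum hinner
      _ ≤ F ω := Finset.sum_le_sum_of_subset (Finset.subset_univ T)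
  -- measurability of F
  have hFmeas : Measurable F := by
    apply Finset.measurable_sum
    intro i _
    apply Measurable.add
    · exact (measurable_one.indicator (hBmeas K i)).const_mul _
    · apply Finset.measurable_sum
      intro k _
      exact (measurable_one.indicator (hBmeas k i)).const_mul _
  have step1 : μ {ω | simes K (fun j => P j ω) ≤ α} ≤ ∫⁻ ω, F ω ∂μ := by
    calc μ {ω | simes K (fun j => P j ω) ≤ α} ≤ μ {ω | 1 ≤ F ω} :=
          measure_mono (fun ω hω => claim1 ω hω)
      _ ≤ ∫⁻ ω, F ω ∂μ := by
          simpa using mul_meas_ge_le_lintegral₀ hFmeas.aemeasurable 1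
  have step2 : ∫⁻ ω, F ω ∂μ = ∑ i : Fin K,
      (ENNReal.ofReal (1/(K:ℝ)) * μ (B K i)
        + ∑ k ∈ Finset.Ico 1 K, ENNReal.ofReal (1/((k:ℝ)*((k:ℝ)+1))) * μ (B k i)) := by
    rw [hF, lintegral_finset_sum _ (fun i _ => by
      apply Measurable.add
      · exact (measurable_one.indicator (hBmeas K i)).const_mul _
      · apply Finset.measurable_sum
        intro k _
        exact (measurable_one.indicator (hBmeas k i)).const_mul _)]
    refine Finset.sum_congr rfl fun i _ => ?_
    rw [lintegral_add_left ((measurable_one.indicator (hBmeas K i)).const_mul _)]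
    rw [lintegral_const_mul _ (measurable_one.indicator (hBmeas K i)),
      lintegral_indicator_one (hBmeas K i)]
    congr 1
    rw [lintegral_finset_sum _ (fun k _ =>
      (measurable_one.indicator (hBmeas k i)).const_mul _)]
    refine Finset.sum_congr rfl fun k _ => ?_
    rw [lintegral_const_mul _ (measurable_one.indicator (hBmeas k i)),
      lintegral_indicator_one (hBmeas k i)]
  have step3 : ∑ i : Fin K,
      (ENNReal.ofReal (1/(K:ℝ)) * μ (B K i)
        + ∑ k ∈ Finset.Ico 1 K, ENNReal.ofReal (1/((k:ℝ)*((k:ℝ)+1))) * μ (B k i))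
        ≤ ENNReal.ofReal (harm K * α) := by
    have hbound : ∀ i : Fin K,
        ENNReal.ofReal (1/(K:ℝ)) * μ (B K i)
          + ∑ k ∈ Finset.Ico 1 K, ENNReal.ofReal (1/((k:ℝ)*((k:ℝ)+1))) * μ (B k i)
          ≤ ENNReal.ofReal (harm K * α / K) := by
      intro i
      calc ENNReal.ofReal (1/(K:ℝ)) * μ (B K i)
            + ∑ k ∈ Finset.Ico 1 K, ENNReal.ofReal (1/((k:ℝ)*((k:ℝ)+1))) * μ (B k i)
          ≤ ENNReal.ofReal (1/(K:ℝ)) * ENNReal.ofReal ((K:ℝ)*α/K)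
            + ∑ k ∈ Finset.Ico 1 K, ENNReal.ofReal (1/((k:ℝ)*((k:ℝ)+1)))
                * ENNReal.ofReal ((k:ℝ)*α/K) := by
            refine add_le_add ?_ (Finset.sum_le_sum fun k hk => ?_)
            · exact mul_le_mul_right (key i K le_rfl) _
            · exact mul_le_mul_right (key i k (Finset.mem_Ico.mp hk).2.le) _
        _ = ENNReal.ofReal ((1/(K:ℝ))*((K:ℝ)*α/K)
              + ∑ k ∈ Finset.Ico 1 K, (1/((k:ℝ)*((k:ℝ)+1)))*((k:ℝ)*α/K)) := by
            rw [ENNReal.ofReal_add (by positivity) (Finset.sum_nonneg fun k _ => by positivity),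
              ENNReal.ofReal_mul (by positivity),
              ENNReal.ofReal_sum_of_nonneg (fun k _ => by positivity)]
            congr 1
            exact Finset.sum_congr rfl fun k _ => (ENNReal.ofReal_mul (by positivity)).symm
        _ = ENNReal.ofReal (harm K * α / K) := by rw [hommel_arith K hK α]
    calc ∑ i : Fin K,
        (ENNReal.ofReal (1/(K:ℝ)) * μ (B K i)
          + ∑ k ∈ Finset.Ico 1 K, ENNReal.ofReal (1/((k:ℝ)*((k:ℝ)+1))) * μ (B k i))
        ≤ ∑ _i : Fin K, ENNReal.ofReal (harm K * α / K) :=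
          Finset.sum_le_sum fun i _ => hbound i
      _ = (K : ℝ≥0∞) * ENNReal.ofReal (harm K * α / K) := by
          rw [Finset.sum_const, Finset.card_univ, Fintype.card_fin, nsmul_eq_mul]
      _ = ENNReal.ofReal ((K:ℝ) * (harm K * α / K)) := by
          rw [ENNReal.ofReal_mul (by positivity), ENNReal.ofReal_natCast]
      _ = ENNReal.ofReal (harm K * α) := by
          congr 1
          field_simp
  exact le_trans step1 (le_trans step2.le step3)
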